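/- For m+1 symmetric polynomials φ̂₀,…,φ̂_m in variables t₁,…,t_m defined by the generating identity ∏_{i=1}^m (t_i + (1-t_i)u) = ∑_{n=0}^m φ̂_n(t₁,…,t_m) u^n, the only polynomial relation among φ̂₀,…,φ̂_m is that their sum equals 1; equivalently, the kernel of the algebra homomorphism ℂ[φ₀,…,φ_m] → ℂ[t₁,…,t_m]^{S_m} sending φ_n to φ̂_n is the principal ideal generated by φ₀+⋯+φ_m - 1. -/

import Mathlib

/-- The symmetric polynomials φ̂₀,…,φ̂_m in t₁,…,t_m defined by
∏ᵢ (tᵢ + (1-tᵢ)u) = ∑ₙ φ̂ₙ uⁿ: the n-th one is the coefficient of uⁿ in the product. -/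
noncomputable def phiHat (m : ℕ) (n : ℕ) : MvPolynomial (Fin m) ℂ :=
  ((∏ i : Fin m, (Polynomial.C (MvPolynomial.X i) +
      Polynomial.C (1 - MvPolynomial.X i) * Polynomial.X)) :
    Polynomial (MvPolynomial (Fin m) ℂ)).coeff n

namespace Stmt9Aux

open Polynomial MvPolynomial Finset Matrix

/-- q m k = u^(m-k) (1-u)^k over ℂ. -/
noncomputable def q (m k : ℕ) : Polynomial ℂ :=
  Polynomial.X ^ (m - k) * (1 - Polynomial.X) ^ k

lemma natDegree_q_le (m k : ℕ) (hk : k ≤ m) : (q m k).natDegree ≤ m := by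
  refine (natDegree_mul_le).trans ?_
  have h1 : ((Polynomial.X : Polynomial ℂ) ^ (m - k)).natDegree ≤ m - k := by
    simp
  have h2 : ((1 - Polynomial.X : Polynomial ℂ) ^ k).natDegree ≤ k := by
    refine natDegree_pow_le.trans ?_
    have : (1 - Polynomial.X : Polynomial ℂ).natDegree ≤ 1 := by
      refine (natDegree_sub_le _ _).trans ?_
      simp
    simpa using Nat.mul_le_mul_left k this
  omega

lemma eval_one_q (m k : ℕ) : (q m k).eval 1 = if k = 0 then 1 else 0 := by
  rcases Nat.eq_zero_or_pos k with rfl | hk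
  · simp [q]
  · simp [q, zero_pow (by omega : k ≠ 0), if_neg (by omega : ¬ k = 0)]

/-- Key binomial identity: ∑_j C(m-n, j) q m j = X^n for n ≤ m. -/
lemma sum_choose_q (m n : ℕ) (hn : n ≤ m) :
    ∑ j ∈ Finset.range (m + 1), Polynomial.C (((m - n).choose j : ℂ)) * q m j
      = (Polynomial.X : Polynomial ℂ) ^ n := by
  have key : (Polynomial.X : Polynomial ℂ) ^ n
      = ∑ j ∈ Finset.range (m - n + 1), Polynomial.C (((m - n).choose j : ℂ)) * q m j := by
    calc (Polynomial.X : Polynomial ℂ) ^ n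
        = Polynomial.X ^ n * ((1 - Polynomial.X) + Polynomial.X) ^ (m - n) := by
          norm_num
      _ = Polynomial.X ^ n * ∑ j ∈ Finset.range (m - n + 1),
            (1 - Polynomial.X) ^ j * Polynomial.X ^ (m - n - j) * ((m - n).choose j :
              Polynomial ℂ) := by rw [add_pow]
      _ = ∑ j ∈ Finset.range (m - n + 1), Polynomial.C (((m - n).choose j : ℂ)) * q m j := by
          rw [Finset.mul_sum]
          refine Finset.sum_congr rfl fun j hj => ?_
          rw [Finset.mem_range] at hj
          have hexp : n + (m - n - j) = m - j := by omega
          have : ((m - n).choose j : Polynomial ℂ) = Polynomial.C (((m - n).choose j : ℂ)) := by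
            simp
          rw [this, q, ← hexp, pow_add]
          ring
  rw [← Finset.sum_subset (Finset.range_subset_range.mpr (by omega : m - n + 1 ≤ m + 1))
    (fun j _ hj => ?_), ← key]
  have : (m - n).choose j = 0 := Nat.choose_eq_zero_of_lt (by simp [Finset.mem_range] at hj; omega)
  simp [this]

lemma sum_coeff_eq_eval_one {m : ℕ} (p : Polynomial ℂ) (h : p.natDegree ≤ m) :
    ∑ n : Fin (m + 1), p.coeff n = p.eval 1 := by
  rw [Polynomial.eval_eq_sum_range' (by omega : p.natDegree < m + 1)]
  rw [Fin.sum_univ_eq_sum_range (fun n => p.coeff n)]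
  simp

/-- The generating identity, multiset version, proven via the fraction field. -/
lemma gen_id' {A : Type*} [CommRing A] [IsDomain A] (s : Multiset A) :
    (s.map fun r => Polynomial.C r + Polynomial.C (1 - r) * Polynomial.X).prod
    = ∑ k ∈ Finset.range (Multiset.card s + 1), Polynomial.C (Multiset.esymm s k) *
        (Polynomial.X ^ (Multiset.card s - k) * (1 - Polynomial.X) ^ k) := by
  set m := Multiset.card s with hm
  let K := FractionRing (Polynomial A)
  let ι : Polynomial A →+* K := algebraMap (Polynomial A) K
  have hι : Function.Injective ι := IsFractionRing.injective _ _
  apply hι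
  set U : K := ι Polynomial.X with hUdef
  have hune : (1 : K) - U ≠ 0 := by
    rw [← map_one ι, ← map_sub]
    intro h
    have h0 : (1 - Polynomial.X : Polynomial A) = 0 := hι (h.trans (map_zero ι).symm)
    have := congrArg (fun p => Polynomial.coeff p 1) h0
    simp [Polynomial.coeff_one] at this
  set w : K := U / (1 - U) with hwdef
  have hw : (1 - U) * w = U := by
    rw [hwdef, mul_div_cancel₀ _ hune]
  let φ : A →+* K := ι.comp (Polynomial.C : A →+* Polynomial A)
  let Φ : Polynomial A →+* K := Polynomial.eval₂RingHom φ w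
  have hV := Multiset.prod_X_add_C_eq_sum_esymm s
  have hΦ := congrArg Φ hV
  have hL : Φ (s.map fun r => Polynomial.X + Polynomial.C r).prod =
      ((s.map fun r => w + φ r)).prod := by
    rw [← Multiset.prod_hom _ Φ, Multiset.map_map]
    congr 1
    refine Multiset.map_congr rfl fun r _ => ?_
    simp [Φ]
  have hR : Φ (∑ j ∈ Finset.range (m + 1),
        Polynomial.C (Multiset.esymm s j) * Polynomial.X ^ (m - j)) =
      ∑ j ∈ Finset.range (m + 1), φ (Multiset.esymm s j) * w ^ (m - j) := by
    rw [map_sum]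
    refine Finset.sum_congr rfl fun j _ => ?_
    simp [Φ]
  rw [hL, hR] at hΦ
  calc ι (s.map fun r => Polynomial.C r + Polynomial.C (1 - r) * Polynomial.X).prod
      = ((s.map fun r => φ r + (1 - φ r) * U)).prod := by
        rw [← Multiset.prod_hom _ ι, Multiset.map_map]
        congr 1
        refine Multiset.map_congr rfl fun r _ => ?_
        simp [φ, hUdef]
    _ = ((s.map fun r => (1 - U) * (w + φ r))).prod := by
        refine congrArg _ (Multiset.map_congr rfl fun r _ => ?_)
        linear_combination -hw
    _ = (1 - U) ^ m * ((s.map fun r => w + φ r)).prod := by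
        rw [Multiset.prod_map_mul]
        congr 1
        simp [hm]
    _ = (1 - U) ^ m * ∑ j ∈ Finset.range (m + 1), φ (Multiset.esymm s j) * w ^ (m - j) := by
        rw [hΦ]
    _ = ∑ j ∈ Finset.range (m + 1), φ (Multiset.esymm s j) * (U ^ (m - j) * (1 - U) ^ j) := by
        rw [Finset.mul_sum]
        refine Finset.sum_congr rfl fun j hj => ?_
        rw [Finset.mem_range] at hj
        have hsplit : (1 - U) ^ m = (1 - U) ^ (m - j) * (1 - U) ^ j := by
          rw [← pow_add]
          congr 1
          omega
        have hUp : U ^ (m - j) = (1 - U) ^ (m - j) * w ^ (m - j) := by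
          rw [← mul_pow, hw]
        rw [hUp, hsplit]
        ring
    _ = ι (∑ k ∈ Finset.range (m + 1), Polynomial.C (Multiset.esymm s k) *
          (Polynomial.X ^ (m - k) * (1 - Polynomial.X) ^ k)) := by
        rw [map_sum]
        refine Finset.sum_congr rfl fun j _ => ?_
        simp [φ, hUdef]

/-- The generating identity for the `phiHat` product. -/
lemma gen_id (m : ℕ) :
    (∏ i : Fin m, (Polynomial.C (MvPolynomial.X i) +
        Polynomial.C (1 - MvPolynomial.X i) * Polynomial.X) :
      Polynomial (MvPolynomial (Fin m) ℂ)) =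
    ∑ k ∈ Finset.range (m + 1), Polynomial.C (esymm (Fin m) ℂ k) *
      (Polynomial.X ^ (m - k) * (1 - Polynomial.X) ^ k) := by
  have h := gen_id' (Finset.univ.val.map fun i : Fin m =>
    (MvPolynomial.X i : MvPolynomial (Fin m) ℂ))
  have hcard : Multiset.card (Finset.univ.val.map fun i : Fin m =>
      (MvPolynomial.X i : MvPolynomial (Fin m) ℂ)) = m := by
    simp
  rw [hcard] at h
  rw [MvPolynomial.esymm_eq_multiset_esymm, ← h, Multiset.map_map]
  rfl

/-- The coefficient formula: φ̂ₙ = ∑ₖ (coefficients) • eₖ. -/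
lemma phiHat_eq (m n : ℕ) :
    phiHat m n = ∑ k ∈ Finset.range (m + 1), ((q m k).coeff n) • esymm (Fin m) ℂ k := by
  rw [phiHat, gen_id, Polynomial.finset_sum_coeff]
  refine Finset.sum_congr rfl fun k _ => ?_
  have hmap : (Polynomial.X ^ (m - k) * (1 - Polynomial.X) ^ k :
      Polynomial (MvPolynomial (Fin m) ℂ)) =
      Polynomial.map (algebraMap ℂ (MvPolynomial (Fin m) ℂ)) (q m k) := by
    simp [q, Polynomial.map_mul, Polynomial.map_pow, Polynomial.map_sub]
  rw [Polynomial.coeff_C_mul, hmap, Polynomial.coeff_map, Algebra.smul_def, mul_comm]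


/-! ### The linear change of variables -/

variable (m : ℕ)

/-- Matrix of coefficients: `Cmat n k = coeff n (q m k)`. -/
noncomputable def Cmat : Matrix (Fin (m + 1)) (Fin (m + 1)) ℂ :=
  fun n k => (q m k).coeff n

/-- Inverse matrix data: binomial coefficients. -/
noncomputable def Dmat : Matrix (Fin (m + 1)) (Fin (m + 1)) ℂ :=
  fun n k => ((m - (n : ℕ)).choose k : ℂ)

lemma DCt : Dmat m * (Cmat m)ᵀ = 1 := by
  ext n k
  rw [Matrix.mul_apply]
  have h := congrArg (fun p => Polynomial.coeff p k) (sum_choose_q m n (by omega))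
  simp only [Polynomial.finset_sum_coeff, Polynomial.coeff_C_mul,
    Polynomial.coeff_X_pow] at h
  rw [← Fin.sum_univ_eq_sum_range
    (fun j => (((m - (n : ℕ)).choose j : ℂ)) * (q m j).coeff k)] at h
  simp only [Matrix.transpose_apply, Cmat, Dmat]
  rw [h, Matrix.one_apply]
  congr 1
  simp [Fin.ext_iff, eq_comm]

lemma CDt : Cmat m * (Dmat m)ᵀ = 1 := by
  have h := congrArg Matrix.transpose (DCt m)
  rwa [Matrix.transpose_mul, Matrix.transpose_transpose, Matrix.transpose_one] at h

lemma DtC : (Dmat m)ᵀ * Cmat m = 1 := mul_eq_one_comm.mp (CDt m)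

/-- Linear substitution algebra endomorphism attached to a matrix. -/
noncomputable def linS (M : Matrix (Fin (m + 1)) (Fin (m + 1)) ℂ) :
    MvPolynomial (Fin (m + 1)) ℂ →ₐ[ℂ] MvPolynomial (Fin (m + 1)) ℂ :=
  aeval fun n => ∑ k, MvPolynomial.C (M n k) * MvPolynomial.X k

lemma linS_comp (M N : Matrix (Fin (m + 1)) (Fin (m + 1)) ℂ) :
    (linS m M).comp (linS m N) = linS m (N * M) := by
  apply MvPolynomial.algHom_ext
  intro n
  simp only [AlgHom.comp_apply, linS, MvPolynomial.aeval_X, map_sum, _root_.map_mul,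
    MvPolynomial.aeval_C, MvPolynomial.algebraMap_eq, Finset.mul_sum]
  rw [Finset.sum_comm]
  refine Finset.sum_congr rfl fun j _ => ?_
  rw [Matrix.mul_apply, map_sum, Finset.sum_mul]
  refine Finset.sum_congr rfl fun k _ => ?_
  rw [_root_.map_mul]
  ring

lemma linS_one : linS m 1 = AlgHom.id ℂ (MvPolynomial (Fin (m + 1)) ℂ) := by
  apply MvPolynomial.algHom_ext
  intro n
  simp [linS, Matrix.one_apply, apply_ite MvPolynomial.C]

/-- The substitution sending `Xₙ` to the linear combination of `X`'s giving `φ̂ₙ` in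
terms of the elementary symmetric polynomials. -/
noncomputable def Smap := linS m (Cmat m)

noncomputable def Smap' := linS m ((Dmat m)ᵀ)

lemma SS' : (Smap m).comp (Smap' m) = AlgHom.id ℂ _ := by
  rw [Smap, Smap', linS_comp, DtC, linS_one]

lemma S'S : (Smap' m).comp (Smap m) = AlgHom.id ℂ _ := by
  rw [Smap, Smap', linS_comp, CDt, linS_one]

lemma Sbij : Function.Bijective (Smap m) := by
  constructor
  · exact Function.LeftInverse.injective
      (g := Smap' m) fun x => DFunLike.congr_fun (S'S m) x
  · exact Function.RightInverse.surjective
      (g := Smap' m) fun x => DFunLike.congr_fun (SS' m) x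

/-- The two algebra homomorphisms. -/
noncomputable def Fhom : MvPolynomial (Fin (m + 1)) ℂ →ₐ[ℂ] MvPolynomial (Fin m) ℂ :=
  aeval fun n : Fin (m + 1) => phiHat m (n : ℕ)

noncomputable def Ghom : MvPolynomial (Fin (m + 1)) ℂ →ₐ[ℂ] MvPolynomial (Fin m) ℂ :=
  aeval fun n : Fin (m + 1) => esymm (Fin m) ℂ (n : ℕ)

lemma GS : (Ghom m).comp (Smap m) = Fhom m := by
  apply MvPolynomial.algHom_ext
  intro n
  simp only [AlgHom.comp_apply, Smap, linS, Fhom, Ghom, MvPolynomial.aeval_X, map_sum, _root_.map_mul,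
    MvPolynomial.aeval_C, MvPolynomial.algebraMap_eq]
  rw [phiHat_eq, ← Fin.sum_univ_eq_sum_range
    (fun k => ((q m k).coeff n) • esymm (Fin m) ℂ k)]
  refine Finset.sum_congr rfl fun k _ => ?_
  rw [Algebra.smul_def, MvPolynomial.algebraMap_eq]
  rfl

lemma S_elt : Smap m ((∑ n : Fin (m + 1), MvPolynomial.X n) - 1) =
    MvPolynomial.X 0 - 1 := by
  rw [map_sub, _root_.map_one]
  congr 1
  have : ∀ n : Fin (m + 1), Smap m (MvPolynomial.X n) =
      ∑ k, MvPolynomial.C (Cmat m n k) * MvPolynomial.X k := fun n => by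
    simp [Smap, linS]
  rw [map_sum]
  simp only [this]
  rw [Finset.sum_comm]
  have hcol : ∀ k : Fin (m + 1), (∑ n : Fin (m + 1), Cmat m n k) =
      if (k : ℕ) = 0 then 1 else 0 := by
    intro k
    calc ∑ n : Fin (m + 1), Cmat m n k = (q m k).eval 1 :=
          sum_coeff_eq_eval_one (q m k) (natDegree_q_le m k (by omega))
      _ = if (k : ℕ) = 0 then 1 else 0 := eval_one_q m (k : ℕ)
  calc ∑ k : Fin (m + 1), ∑ n : Fin (m + 1), MvPolynomial.C (Cmat m n k) * MvPolynomial.X k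
      = ∑ k : Fin (m + 1), MvPolynomial.C (∑ n : Fin (m + 1), Cmat m n k) * MvPolynomial.X k := by
        refine Finset.sum_congr rfl fun k _ => ?_
        rw [map_sum, Finset.sum_mul]
    _ = ∑ k : Fin (m + 1), (if k = 0 then MvPolynomial.C 1 * MvPolynomial.X k else 0) := by
        refine Finset.sum_congr rfl fun k _ => ?_
        rw [hcol]
        by_cases hk : k = 0
        · simp [hk]
        · rw [if_neg (fun h => hk (Fin.ext (by simp [h]))), if_neg hk, map_zero, zero_mul]
    _ = MvPolynomial.X 0 := by
        rw [Finset.sum_ite_eq' Finset.univ (0 : Fin (m + 1))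
          (fun k => MvPolynomial.C 1 * MvPolynomial.X k)]
        simp

/-! ### Kernel of the elementary-symmetric evaluation -/

/-- Inclusion of the small polynomial ring via the variables `X₁,…,X_m`. -/
noncomputable def rho : MvPolynomial (Fin m) ℂ →ₐ[ℂ] MvPolynomial (Fin (m + 1)) ℂ :=
  rename Fin.succ

/-- Substitute `X₀ ↦ 1` and shift down the other variables. -/
noncomputable def kap : MvPolynomial (Fin (m + 1)) ℂ →ₐ[ℂ] MvPolynomial (Fin m) ℂ :=
  aeval (Fin.cases 1 fun i => MvPolynomial.X i)

lemma kerG : RingHom.ker (Ghom m).toRingHom =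
    Ideal.span {(MvPolynomial.X 0 : MvPolynomial (Fin (m + 1)) ℂ) - 1} := by
  apply le_antisymm
  · intro P hP
    rw [RingHom.mem_ker] at hP
    set I₀ : Ideal (MvPolynomial (Fin (m + 1)) ℂ) :=
      Ideal.span {(MvPolynomial.X 0 : MvPolynomial (Fin (m + 1)) ℂ) - 1} with hI₀
    -- the retraction r
    set r : MvPolynomial (Fin (m + 1)) ℂ →ₐ[ℂ] MvPolynomial (Fin (m + 1)) ℂ :=
      (rho m).comp (kap m) with hr
    have hr0 : r (MvPolynomial.X 0) = 1 := by
      simp [hr, rho, kap, Fin.cases_zero]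
    have hrs : ∀ i : Fin m, r (MvPolynomial.X i.succ) = MvPolynomial.X i.succ := by
      intro i
      simp [hr, rho, kap, Fin.cases_succ]
    -- r is the identity modulo I₀
    have hmk : (Ideal.Quotient.mkₐ ℂ I₀).comp r = Ideal.Quotient.mkₐ ℂ I₀ := by
      apply MvPolynomial.algHom_ext
      intro n
      induction n using Fin.cases with
      | zero =>
        rw [AlgHom.comp_apply, hr0]
        symm
        rw [Ideal.Quotient.mkₐ_eq_mk, Ideal.Quotient.eq]
        exact Ideal.subset_span rfl
      | succ i =>
        rw [AlgHom.comp_apply, hrs]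
    have hPr : P - r P ∈ I₀ := by
      have := DFunLike.congr_fun hmk P
      exact Ideal.Quotient.eq.mp this.symm
    -- G ∘ r = G
    have hGr : (Ghom m).comp r = Ghom m := by
      apply MvPolynomial.algHom_ext
      intro n
      induction n using Fin.cases with
      | zero =>
        rw [AlgHom.comp_apply, hr0, _root_.map_one, Ghom, MvPolynomial.aeval_X]
        simp [esymm_zero]
      | succ i =>
        rw [AlgHom.comp_apply, hrs]
    -- G ∘ ρ is injective
    have hGrho : ∀ p : MvPolynomial (Fin m) ℂ,
        Ghom m (rho m p) = ((esymmAlgHom (Fin m) ℂ m) p).val := by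
      intro p
      rw [esymmAlgHom_apply]
      have : (Ghom m).comp (rho m) =
          MvPolynomial.aeval fun i : Fin m => esymm (Fin m) ℂ ((i : ℕ) + 1) := by
        apply MvPolynomial.algHom_ext
        intro i
        rw [AlgHom.comp_apply, rho, rename_X, Ghom, MvPolynomial.aeval_X,
          MvPolynomial.aeval_X, Fin.val_succ]
      exact DFunLike.congr_fun this p
    -- conclude
    have hkP : kap m P = 0 := by
      have h1 : Ghom m (r P) = 0 := by
        rw [← hP]
        exact DFunLike.congr_fun hGr P
      rw [hr, AlgHom.comp_apply, hGrho] at h1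
      have h2 : (esymmAlgHom (Fin m) ℂ m) (kap m P) = 0 := by
        exact Subtype.ext h1
      have := esymmAlgHom_fin_injective ℂ (le_refl m)
      exact this (by rw [h2, map_zero])
    have : r P = 0 := by rw [hr, AlgHom.comp_apply, hkP, map_zero]
    rw [this, sub_zero] at hPr
    exact hPr
  · rw [Ideal.span_le, Set.singleton_subset_iff]
    change Ghom m (MvPolynomial.X 0 - 1) = 0
    rw [map_sub, _root_.map_one, Ghom, MvPolynomial.aeval_X]
    simp [esymm_zero]

end Stmt9Aux

/-- The only polynomial relation among φ̂₀,…,φ̂_m is that their sum equals 1: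
the kernel of φₙ ↦ φ̂ₙ is the principal ideal (φ₀+⋯+φ_m − 1). -/
theorem stmt_9 (m : ℕ) (hm : 1 ≤ m) :
    RingHom.ker (MvPolynomial.aeval (R := ℂ)
        (fun n : Fin (m + 1) => phiHat m (n : ℕ))).toRingHom =
      Ideal.span
        {(∑ n : Fin (m + 1), MvPolynomial.X n : MvPolynomial (Fin (m + 1)) ℂ) - 1} := by
  have hF : (MvPolynomial.aeval (R := ℂ)
      (fun n : Fin (m + 1) => phiHat m (n : ℕ))) = Stmt9Aux.Fhom m := rfl
  rw [hF, ← Stmt9Aux.GS m]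
  have hcomp : ((Stmt9Aux.Ghom m).comp (Stmt9Aux.Smap m)).toRingHom =
      (Stmt9Aux.Ghom m).toRingHom.comp (Stmt9Aux.Smap m).toRingHom := rfl
  rw [hcomp, ← RingHom.comap_ker, Stmt9Aux.kerG m]
  have hmap : Ideal.map (Stmt9Aux.Smap m).toRingHom
      (Ideal.span {(∑ n : Fin (m + 1), MvPolynomial.X n :
        MvPolynomial (Fin (m + 1)) ℂ) - 1}) =
      Ideal.span {(MvPolynomial.X 0 : MvPolynomial (Fin (m + 1)) ℂ) - 1} := by
    rw [Ideal.map_span, Set.image_singleton]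
    congr 1
    congr 1
    exact Stmt9Aux.S_elt m
  rw [← hmap]
  exact Ideal.comap_map_of_bijective (Stmt9Aux.Smap m).toRingHom (Stmt9Aux.Sbij m)
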